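/- Let (P, ≤) be a poset and ≤' a localization of ≤, i.e., a preorder on P such that (i) x ≤ y implies x ≤' y, and (ii) x ≤' y implies there exists w with w ≤' y and y ≤' w and x ≤ w. Then the relation on the quotient P/~' (where x ~' y iff x ≤' y and y ≤' x) defined by [x] ≤ [y] iff there exist u ∈ [x], v ∈ [y] with u ≤ v, is a partial order, and it coincides with the partial order induced by ≤'. -/

import Mathlib

/-- The setoid on `P` induced by a preorder `le'`: `x ~ y` iff `le' x y` and `le' y x`. -/
def locSetoid {P : Type*} (le' : P → P → Prop) (refl' : ∀ x, le' x x)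
    (trans' : ∀ {x y z}, le' x y → le' y z → le' x z) : Setoid P where
  r x y := le' x y ∧ le' y x
  iseqv :=
    ⟨fun x => ⟨refl' x, refl' x⟩, fun h => ⟨h.2, h.1⟩,
      fun h1 h2 => ⟨trans' h1.1 h2.1, trans' h2.2 h1.2⟩⟩

/-- Let `(P, ≤)` be a poset and `≤'` a localization of `≤`, i.e. a preorder such that
(i) `x ≤ y → x ≤' y`, and (ii) `x ≤' y` implies there is `w` with `w ≤' y`, `y ≤' w`
and `x ≤ w`.  Then the relation on the quotient `P/~'` defined by
`[x] ≤ [y] ↔ ∃ u ∈ [x], v ∈ [y], u ≤ v` is a partial order, and it coincides with the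
partial order induced by `≤'`. -/
theorem localization_quotient_partialOrder {P : Type*} [PartialOrder P]
    (le' : P → P → Prop) (refl' : ∀ x, le' x x)
    (trans' : ∀ {x y z}, le' x y → le' y z → le' x z)
    (h1 : ∀ x y : P, x ≤ y → le' x y)
    (h2 : ∀ x y : P, le' x y → ∃ w, le' w y ∧ le' y w ∧ x ≤ w) :
    ∃ po : PartialOrder (Quotient (locSetoid le' refl' @trans')),
      (∀ x y : P, po.le ⟦x⟧ ⟦y⟧ ↔ ∃ u v : P,
        (le' u x ∧ le' x u) ∧ (le' v y ∧ le' y v) ∧ u ≤ v) ∧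
      (∀ x y : P, po.le ⟦x⟧ ⟦y⟧ ↔ le' x y) := by
  classical
  letI S := locSetoid le' refl' @trans'
  have hlift : ∀ (a b a' b' : P), S.r a a' → S.r b b' → le' a b = le' a' b' := by
    intro a b a' b' ha hb
    simp only [eq_iff_iff]
    exact ⟨fun h => trans' ha.2 (trans' h hb.1), fun h => trans' ha.1 (trans' h hb.2)⟩
  let L : Quotient S → Quotient S → Prop :=
    Quotient.lift₂ le' (fun a b a' b' ha hb => hlift a b a' b' ha hb)
  have Lmk : ∀ x y : P, L ⟦x⟧ ⟦y⟧ = le' x y := fun _ _ => rfl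
  refine ⟨{ le := L
            lt := fun a b => L a b ∧ ¬L b a
            lt_iff_le_not_ge := fun _ _ => Iff.rfl
            le_refl := fun q => Quotient.inductionOn q fun x => refl' x
            le_trans := fun a b c => Quotient.inductionOn₃ a b c
              fun x y z hxy hyz => trans' hxy hyz
            le_antisymm := fun a b => Quotient.inductionOn₂ a b
              fun x y hxy hyx => Quotient.sound ⟨hxy, hyx⟩ }, ?_, fun x y => Iff.rfl⟩
  intro x y
  constructor
  · intro h
    obtain ⟨w, hw1, hw2, hxw⟩ := h2 x y h
    exact ⟨x, w, ⟨refl' x, refl' x⟩, ⟨hw1, hw2⟩, hxw⟩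
  · rintro ⟨u, v, ⟨hux, hxu⟩, ⟨hvy, hyv⟩, huv⟩
    exact trans' hxu (trans' (h1 u v huv) hvy)
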